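/- Let m ≥ 2 and let k = (k_0, k_1, ...) be positive integers with m coprime to (k_0-1)! and to k_j! for every j ≥ 1. Let n ≥ 0 and let N be any integer with m^{N+1} > n. Then the coefficient of q^n in ∏_{j=0}^{N} G_{m^j}^{k_j} is equal, in ℤ/mℤ, to the coefficient of q^n in (∑_{ℓ_0=0}^{m-1} C(k_0-1+ℓ_0, k_0-1) q^{ℓ_0}) · ∏_{j=1}^{N} (∑_{ℓ_j=0}^{m-1} C(k_j+ℓ_j, k_j) q^{ℓ_j m^j}). (This is the coefficientwise form of the expansion B_m^{(k)}(q) ≡ (∑_{ℓ_0=0}^{m-1} C(k_0-1+ℓ_0,k_0-1) q^{ℓ_0}) ∏_{j=1}^{∞} (∑_{ℓ_j=0}^{m-1} C(k_j+ℓ_j,k_j) q^{ℓ_j m^j}) (mod m) for the generating function B_m^{(k)}(q) = ∏_{j=0}^{∞}(1-q^{m^j})^{-k_j}.) -/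

import Mathlib

open PowerSeries Finset

private lemma choose_cast_add_period (m j ℓ : ℕ) [NeZero m]
    (h : Nat.Coprime m (Nat.factorial j)) :
    ((j + (ℓ + m)).choose j : ZMod m) = ((j + ℓ).choose j : ZMod m) := by
  have hu : IsUnit ((Nat.factorial j : ZMod m)) := by
    rw [ZMod.isUnit_iff_coprime]; exact h.symm
  apply hu.mul_left_cancel
  have h1 : (ℓ + m + 1).ascFactorial j = Nat.factorial j * (ℓ + m + j).choose j :=
    Nat.ascFactorial_eq_factorial_mul_choose _ _
  have h2 : (ℓ + 1).ascFactorial j = Nat.factorial j * (ℓ + j).choose j :=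
    Nat.ascFactorial_eq_factorial_mul_choose _ _
  have hc : (((ℓ + m + 1).ascFactorial j : ℕ) : ZMod m)
      = (((ℓ + 1).ascFactorial j : ℕ) : ZMod m) := by
    rw [Nat.cast_ascFactorial, Nat.cast_ascFactorial]
    congr 1
    push_cast [ZMod.natCast_self]
    ring
  rw [h1, h2] at hc
  rw [Nat.add_comm j (ℓ + m), Nat.add_comm j ℓ]
  push_cast at hc
  exact hc

private noncomputable def Fser (m r j : ℕ) : PowerSeries (ZMod m) :=
  PowerSeries.mk fun n => if r ∣ n then ((j + n / r).choose j : ZMod m) else 0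

private lemma Fser_base (m r : ℕ) (hr : 1 ≤ r) :
    (1 - X ^ r) * Fser m r 0 = 1 := by
  ext n
  rw [sub_mul, one_mul, map_sub, coeff_X_pow_mul', coeff_one]
  simp only [Fser, coeff_mk]
  by_cases hd : r ∣ n
  · obtain ⟨t, rfl⟩ := hd
    rcases Nat.eq_zero_or_pos t with rfl | ht
    · rw [Nat.mul_zero, if_pos (dvd_zero r), if_neg (by omega : ¬ r ≤ 0), if_pos rfl]
      simp
    · have h1 : r ≤ r * t := Nat.le_mul_of_pos_right r ht
      have h2 : r ∣ r * t - r := by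
        have : r * t - r = r * (t - 1) := by
          rw [Nat.mul_sub]; omega
        exact this ▸ dvd_mul_right r (t - 1)
      rw [if_pos (dvd_mul_right r t), if_pos h1, if_pos h2,
        if_neg (Nat.mul_ne_zero (by omega) (by omega) : ¬ r * t = 0)]
      simp
  · have hn0 : n ≠ 0 := by rintro rfl; exact hd (dvd_zero r)
    rw [if_neg hd, if_neg hn0]
    by_cases hle : r ≤ n
    · rw [if_pos hle, if_neg (fun hdvd : r ∣ n - r =>
        hd (by have := Nat.sub_add_cancel hle; exact this ▸ hdvd.add (dvd_refl r)))]
      ring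
    · rw [if_neg hle]; ring

private lemma Fser_step (m r j : ℕ) (hr : 1 ≤ r) :
    (1 - X ^ r) * Fser m r (j + 1) = Fser m r j := by
  ext n
  rw [sub_mul, one_mul, map_sub, coeff_X_pow_mul']
  simp only [Fser, coeff_mk]
  by_cases hd : r ∣ n
  · obtain ⟨t, rfl⟩ := hd
    rw [if_pos (dvd_mul_right r t), if_pos (dvd_mul_right r t),
      Nat.mul_div_cancel_left t (by omega : 0 < r)]
    rcases Nat.eq_zero_or_pos t with rfl | ht
    · rw [if_neg (by omega : ¬ r ≤ r * 0)]
      simp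
    · obtain ⟨s, rfl⟩ := Nat.exists_eq_add_of_le ht
      have h1 : r ≤ r * (1 + s) := Nat.le_mul_of_pos_right r (by omega)
      have he : r * (1 + s) - r = r * s := by rw [Nat.mul_add]; omega
      rw [if_pos h1, he, if_pos (dvd_mul_right r s),
        Nat.mul_div_cancel_left s (by omega : 0 < r)]
      have hp : (j + 1 + (1 + s)).choose (j + 1)
          = (j + (1 + s)).choose j + (j + 1 + s).choose (j + 1) := by
        rw [show j + 1 + (1 + s) = (j + 1 + s) + 1 by omega,
          Nat.choose_succ_succ' (j + 1 + s) j,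
          show j + (1 + s) = j + 1 + s by omega]
      rw [hp]
      push_cast
      ring
  · rw [if_neg hd, if_neg hd]
    by_cases hle : r ≤ n
    · rw [if_pos hle, if_neg (fun hdvd : r ∣ n - r =>
        hd (by have := Nat.sub_add_cancel hle; exact this ▸ hdvd.add (dvd_refl r)))]
      ring
    · rw [if_neg hle]; ring

private lemma Fser_eq_pow (m r j : ℕ) (hr : 1 ≤ r) (g : PowerSeries (ZMod m))
    (hg : (1 - X ^ r) * g = 1) : Fser m r j = g ^ (j + 1) := by
  have hpow : ∀ i, (1 - X ^ r) ^ (i + 1) * Fser m r i = 1 := by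
    intro i
    induction i with
    | zero => simpa using Fser_base m r hr
    | succ i ih =>
      calc (1 - X ^ r) ^ (i + 2) * Fser m r (i + 1)
          = (1 - X ^ r) ^ (i + 1) * ((1 - X ^ r) * Fser m r (i + 1)) := by ring
        _ = 1 := by rw [Fser_step m r i hr]; exact ih
  calc Fser m r j = ((1 - X ^ r) * g) ^ (j + 1) * Fser m r j := by
        rw [hg, one_pow, one_mul]
    _ = g ^ (j + 1) * ((1 - X ^ r) ^ (j + 1) * Fser m r j) := by rw [mul_pow]; ring
    _ = g ^ (j + 1) := by rw [hpow j, mul_one]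

private lemma Fser_key (m r j : ℕ) [NeZero m] (hm : 2 ≤ m) (hr : 1 ≤ r)
    (h : Nat.Coprime m (Nat.factorial j)) :
    (1 - X ^ (r * m)) * Fser m r j
      = ∑ s ∈ range m, (PowerSeries.C (R := ZMod m)) ((j + s).choose j : ZMod m) * X ^ (s * r) := by
  ext n
  rw [sub_mul, one_mul, map_sub, coeff_X_pow_mul', map_sum]
  simp only [Fser, coeff_mk, coeff_C_mul, coeff_X_pow, mul_ite, mul_one, mul_zero]
  by_cases hd : r ∣ n
  · obtain ⟨t, rfl⟩ := hd
    rw [if_pos (dvd_mul_right r t), Nat.mul_div_cancel_left t (by omega : 0 < r)]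
    by_cases htm : t < m
    · have hlt : ¬ r * m ≤ r * t := by
        intro hle
        exact absurd (Nat.le_of_mul_le_mul_left hle (by omega)) (by omega)
      rw [if_neg hlt, sub_zero]
      rw [Finset.sum_eq_single t]
      · rw [if_pos (mul_comm r t)]
      · intro s hs hst
        rw [if_neg (fun hEq : r * t = s * r => hst (by
          have : s * r = r * s := mul_comm s r
          exact (Nat.eq_of_mul_eq_mul_left (by omega : 0 < r) (hEq.trans this)).symm))]
      · intro habs
        exact absurd (Finset.mem_range.mpr htm) habs
    · have hle : r * m ≤ r * t := Nat.mul_le_mul_left r (by omega)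
      have he : r * t - r * m = r * (t - m) := by rw [Nat.mul_sub]
      rw [if_pos hle, he, if_pos (dvd_mul_right r (t - m)),
        Nat.mul_div_cancel_left (t - m) (by omega : 0 < r)]
      have hper : ((j + t).choose j : ZMod m) = ((j + (t - m)).choose j : ZMod m) := by
        have := choose_cast_add_period m j (t - m) h
        rw [show t - m + m = t by omega] at this
        exact this
      rw [hper, sub_self]
      symm
      apply Finset.sum_eq_zero
      intro s hs
      rw [if_neg]
      intro hEq
      have hts : t = s := Nat.eq_of_mul_eq_mul_left (by omega : 0 < r) (hEq.trans (mul_comm s r))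
      have hsm := Finset.mem_range.mp hs
      omega
  · rw [if_neg hd]
    have h2 : (if r * m ≤ n then
        (if r ∣ n - r * m then ((j + (n - r * m) / r).choose j : ZMod m) else 0) else 0) = 0 := by
      by_cases hle : r * m ≤ n
      · rw [if_pos hle, if_neg]
        intro hdvd
        have hrm : r ∣ r * m := dvd_mul_right r m
        exact hd (by
          have := Nat.sub_add_cancel hle
          exact this ▸ hdvd.add (hrm))
      · rw [if_neg hle]
    rw [h2, sub_zero]
    symm
    apply Finset.sum_eq_zero
    intro s hs
    rw [if_neg]
    intro hEq
    exact hd (hEq ▸ Dvd.intro_left s rfl)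

theorem coloured_mary_genfun_expansion_mod (m : ℕ) (hm : 2 ≤ m) (k : ℕ → ℕ) (hk : ∀ j, 0 < k j)
    (h0 : Nat.Coprime m (Nat.factorial (k 0 - 1)))
    (hj : ∀ j, 1 ≤ j → Nat.Coprime m (Nat.factorial (k j)))
    (G : ℕ → PowerSeries (ZMod m)) (hG : ∀ r, 1 ≤ r → (1 - X ^ r) * G r = 1)
    (n N : ℕ) (hN : n < m ^ (N + 1)) :
    PowerSeries.coeff (R := ZMod m) n (∏ j ∈ range (N + 1), (G (m ^ j)) ^ k j)
      = PowerSeries.coeff (R := ZMod m) n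
          ((∑ ℓ ∈ range m, (PowerSeries.C (R := ZMod m)) ((k 0 - 1 + ℓ).choose (k 0 - 1) : ZMod m) * X ^ ℓ)
            * ∏ j ∈ Icc 1 N, ∑ ℓ ∈ range m,
                (PowerSeries.C (R := ZMod m)) ((k j + ℓ).choose (k j) : ZMod m) * X ^ (ℓ * m ^ j)) := by
  haveI : NeZero m := ⟨by omega⟩
  set P0 : PowerSeries (ZMod m) :=
    ∑ ℓ ∈ range m, (PowerSeries.C (R := ZMod m)) ((k 0 - 1 + ℓ).choose (k 0 - 1) : ZMod m) * X ^ ℓ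
    with hP0
  have main : ∀ i, ∏ j ∈ range (i + 1), (G (m ^ j)) ^ k j
      = (P0 * ∏ j ∈ Icc 1 i, ∑ ℓ ∈ range m,
          (PowerSeries.C (R := ZMod m)) ((k j + ℓ).choose (k j) : ZMod m) * X ^ (ℓ * m ^ j))
        * G (m ^ (i + 1)) := by
    intro i
    induction i with
    | zero =>
      rw [Finset.range_one, Finset.prod_singleton,
        Finset.Icc_eq_empty (by omega : ¬ (1:ℕ) ≤ 0), Finset.prod_empty, mul_one]
      have e1 : Fser m 1 (k 0 - 1) = G 1 ^ (k 0 - 1 + 1) :=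
        Fser_eq_pow m 1 (k 0 - 1) le_rfl (G 1) (hG 1 le_rfl)
      have e2 := Fser_key m 1 (k 0 - 1) hm le_rfl h0
      simp only [one_mul, mul_one] at e2
      have hg2 := hG (m ^ 1) (by simpa using (by omega : 1 ≤ m))
      have e3 : Fser m 1 (k 0 - 1) = P0 * G (m ^ 1) := by
        calc Fser m 1 (k 0 - 1)
            = Fser m 1 (k 0 - 1) * ((1 - X ^ m ^ 1) * G (m ^ 1)) := by rw [hg2, mul_one]
          _ = ((1 - X ^ m) * Fser m 1 (k 0 - 1)) * G (m ^ 1) := by rw [pow_one]; ring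
          _ = P0 * G (m ^ 1) := by rw [e2]
      rw [show k 0 - 1 + 1 = k 0 by have := hk 0; omega] at e1
      rw [pow_zero, ← e1, e3]
    | succ i ih =>
      rw [Finset.prod_range_succ, ih]
      have hri : 1 ≤ m ^ (i + 1) := Nat.one_le_pow _ _ (by omega)
      have hri2 : 1 ≤ m ^ (i + 1 + 1) := Nat.one_le_pow _ _ (by omega)
      have e1 : Fser m (m ^ (i + 1)) (k (i + 1)) = G (m ^ (i + 1)) ^ (k (i + 1) + 1) :=
        Fser_eq_pow _ _ _ hri _ (hG _ hri)
      have e2 := Fser_key m (m ^ (i + 1)) (k (i + 1)) hm hri (hj (i + 1) (by omega))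
      rw [show m ^ (i + 1) * m = m ^ (i + 1 + 1) from (pow_succ m (i + 1)).symm] at e2
      have hg2 := hG (m ^ (i + 1 + 1)) hri2
      have e3 : Fser m (m ^ (i + 1)) (k (i + 1))
          = (∑ s ∈ range m, (PowerSeries.C (R := ZMod m))
              ((k (i + 1) + s).choose (k (i + 1)) : ZMod m) * X ^ (s * m ^ (i + 1)))
            * G (m ^ (i + 1 + 1)) := by
        calc Fser m (m ^ (i + 1)) (k (i + 1))
            = Fser m (m ^ (i + 1)) (k (i + 1))
              * ((1 - X ^ m ^ (i + 1 + 1)) * G (m ^ (i + 1 + 1))) := by rw [hg2, mul_one]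
          _ = ((1 - X ^ m ^ (i + 1 + 1)) * Fser m (m ^ (i + 1)) (k (i + 1)))
              * G (m ^ (i + 1 + 1)) := by ring
          _ = _ := by rw [e2]
      calc (P0 * ∏ j ∈ Icc 1 i, ∑ ℓ ∈ range m,
              (PowerSeries.C (R := ZMod m)) ((k j + ℓ).choose (k j) : ZMod m) * X ^ (ℓ * m ^ j))
            * G (m ^ (i + 1)) * G (m ^ (i + 1)) ^ k (i + 1)
          = (P0 * ∏ j ∈ Icc 1 i, ∑ ℓ ∈ range m,
              (PowerSeries.C (R := ZMod m)) ((k j + ℓ).choose (k j) : ZMod m) * X ^ (ℓ * m ^ j))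
            * G (m ^ (i + 1)) ^ (k (i + 1) + 1) := by ring
        _ = (P0 * ∏ j ∈ Icc 1 i, ∑ ℓ ∈ range m,
              (PowerSeries.C (R := ZMod m)) ((k j + ℓ).choose (k j) : ZMod m) * X ^ (ℓ * m ^ j))
            * ((∑ s ∈ range m, (PowerSeries.C (R := ZMod m))
                ((k (i + 1) + s).choose (k (i + 1)) : ZMod m) * X ^ (s * m ^ (i + 1)))
              * G (m ^ (i + 1 + 1))) := by rw [← e1, e3]
        _ = (P0 * ∏ j ∈ Icc 1 (i + 1), ∑ ℓ ∈ range m,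
              (PowerSeries.C (R := ZMod m)) ((k j + ℓ).choose (k j) : ZMod m) * X ^ (ℓ * m ^ j))
            * G (m ^ (i + 1 + 1)) := by
            rw [Finset.prod_Icc_succ_top (by omega : 1 ≤ i + 1)]
            ring
  rw [main N]
  have hrN : 1 ≤ m ^ (N + 1) := Nat.one_le_pow _ _ (by omega)
  have hgN : G (m ^ (N + 1)) = Fser m (m ^ (N + 1)) 0 := by
    rw [Fser_eq_pow m (m ^ (N + 1)) 0 hrN _ (hG _ hrN), pow_one]
  rw [hgN, coeff_mul]
  rw [Finset.sum_eq_single (n, 0)]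
  · simp [Fser, coeff_mk]
  · rintro ⟨a, b⟩ hab hne
    have hab' := Finset.HasAntidiagonal.mem_antidiagonal.mp hab
    simp only at hab'
    have hb : b ≠ 0 := by
      rintro rfl
      exact hne (by rw [show a = n by omega])
    have hnd : ¬ m ^ (N + 1) ∣ b := fun hdvd =>
      absurd (Nat.le_of_dvd (by omega) hdvd) (by omega)
    simp [Fser, coeff_mk, hnd]
  · intro habs
    exact absurd (Finset.HasAntidiagonal.mem_antidiagonal.mpr (by simp)) habs
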